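/- Let f = Σᵢ₌₁ᵗ cᵢmᵢ ∈ F[x₁,…,xₙ] over a field F with t ≤ T nonzero terms, and all partial degrees less than D. Let s = (1, D, D², …, D^{n−1}), let N₁ = max{1, ⌈n(T−1)·log₂ D⌉}, and let p₁,…,p_{4N₁} be 4N₁ distinct primes. Let j₀ ∈ [1, 4N₁] be such that f(x^s) mod (x^{p_{j₀}} − 1) has at least as many nonzero terms as f(x^s) mod (x^{p_j} − 1) for every j. Then at least ⌈t/2⌉ terms of f are not collisions in f(x^s) mod (x^{p_{j₀}} − 1). -/

import Mathlib

open scoped Classical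
open Polynomial

/-- Kronecker-type substitution of a multivariate polynomial along exponent
weights `s`. -/
noncomputable def kronPoly {F : Type*} [CommRing F] {n : ℕ}
    (s : Fin n → ℕ) (f : MvPolynomial (Fin n) F) : Polynomial F :=
  ∑ a ∈ f.support, Polynomial.C (f.coeff a) * Polynomial.X ^ (∑ i, a i * s i)

/-- Number of nonzero terms of g mod (x^p - 1). -/
noncomputable def numTermsMod {F : Type*} [Field F] (g : Polynomial F) (p : ℕ) : ℕ :=
  (g %ₘ (Polynomial.X ^ p - 1)).support.card

private lemma baseD_lt {D : ℕ} (hD : 0 < D) : ∀ {n : ℕ} (a : Fin n → ℕ), (∀ i, a i < D) →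
    (∑ i, a i * D ^ (i : ℕ)) < D ^ n := by
  intro n
  induction n with
  | zero => intro a _; simpa using Nat.one_pos
  | succ n ih =>
    intro a ha
    rw [Fin.sum_univ_succ]
    have h1 : ∑ i : Fin n, a i.succ * D ^ ((i.succ : Fin (n+1)) : ℕ)
        = D * ∑ i : Fin n, a i.succ * D ^ (i : ℕ) := by
      rw [Finset.mul_sum]
      refine Finset.sum_congr rfl fun i _ => ?_
      rw [Fin.val_succ, pow_succ]; ring
    rw [h1]
    have hT : (∑ i : Fin n, a i.succ * D ^ (i : ℕ)) + 1 ≤ D ^ n :=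
      ih (fun i => a i.succ) (fun i => ha i.succ)
    calc a 0 * D ^ ((0 : Fin (n+1)) : ℕ) + D * ∑ i : Fin n, a i.succ * D ^ (i : ℕ)
        < D * ((∑ i : Fin n, a i.succ * D ^ (i : ℕ)) + 1) := by
          simp only [Fin.val_zero, pow_zero, mul_one, Nat.mul_add]
          have := ha 0; omega
      _ ≤ D * D ^ n := Nat.mul_le_mul_left D hT
      _ = D ^ (n + 1) := by ring

private lemma baseD_inj {D : ℕ} : ∀ {n : ℕ} (a b : Fin n → ℕ), (∀ i, a i < D) → (∀ i, b i < D) →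
    (∑ i, a i * D ^ (i : ℕ)) = (∑ i, b i * D ^ (i : ℕ)) → a = b := by
  intro n
  induction n with
  | zero => intro a b _ _ _; funext i; exact i.elim0
  | succ n ih =>
    intro a b ha hb h
    have hD : 0 < D := lt_of_le_of_lt (Nat.zero_le _) (ha 0)
    rw [Fin.sum_univ_succ, Fin.sum_univ_succ] at h
    have ta : ∑ i : Fin n, a i.succ * D ^ ((i.succ : Fin (n+1)) : ℕ)
        = D * ∑ i : Fin n, a i.succ * D ^ (i : ℕ) := by
      rw [Finset.mul_sum]; refine Finset.sum_congr rfl fun i _ => ?_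
      rw [Fin.val_succ, pow_succ]; ring
    have tb : ∑ i : Fin n, b i.succ * D ^ ((i.succ : Fin (n+1)) : ℕ)
        = D * ∑ i : Fin n, b i.succ * D ^ (i : ℕ) := by
      rw [Finset.mul_sum]; refine Finset.sum_congr rfl fun i _ => ?_
      rw [Fin.val_succ, pow_succ]; ring
    rw [ta, tb] at h
    simp only [Fin.val_zero, pow_zero, mul_one] at h
    have h0 : a 0 = b 0 := by
      have := congrArg (· % D) h
      simpa [Nat.add_mul_mod_self_left, Nat.mod_eq_of_lt (ha 0), Nat.mod_eq_of_lt (hb 0)]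
        using this
    have htail : (fun i : Fin n => a i.succ) = (fun i : Fin n => b i.succ) := by
      refine ih (fun i : Fin n => a i.succ) (fun i : Fin n => b i.succ) (fun i => ha i.succ) (fun i => hb i.succ) ?_
      rw [h0] at h
      exact Nat.eq_of_mul_eq_mul_left hD (Nat.add_left_cancel h)
    funext i
    refine Fin.cases h0 (fun j => ?_) i
    exact congrFun htail j

private lemma term_mod {F : Type*} [Field F] (c : F) (e q : ℕ) (hq : q ≠ 0) :
    (C c * X ^ e) %ₘ (X ^ q - 1 : F[X]) = C c * X ^ (e % q) := by
  have hm : (X ^ q - 1 : F[X]).Monic := by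
    simpa using monic_X_pow_sub_C (1 : F) hq
  have hdvd : (X ^ q - 1 : F[X]) ∣ (C c * X ^ e - C c * X ^ (e % q)) := by
    have h1 : (X : F[X]) ^ e = (X ^ q) ^ (e / q) * X ^ (e % q) := by
      rw [← pow_mul, ← pow_add, Nat.div_add_mod]
    have h2 : (X ^ q - 1 : F[X]) ∣ (X ^ q) ^ (e / q) - 1 := by
      simpa using sub_dvd_pow_sub_pow ((X : F[X]) ^ q) 1 (e / q)
    have h3 : C c * X ^ e - C c * X ^ (e % q)
        = C c * X ^ (e % q) * ((X ^ q) ^ (e / q) - 1) := by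
      rw [h1]; ring
    rw [h3]
    exact Dvd.dvd.mul_left h2 _
  have hdeg : (C c * X ^ (e % q)).degree < (X ^ q - 1 : F[X]).degree := by
    have hdq : (X ^ q - 1 : F[X]).degree = q := by
      simpa using degree_X_pow_sub_C (Nat.pos_of_ne_zero hq) (1 : F)
    rw [hdq]
    refine lt_of_le_of_lt (degree_C_mul_X_pow_le _ _) ?_
    exact_mod_cast Nat.mod_lt e (Nat.pos_of_ne_zero hq)
  have hzero : (C c * X ^ e - C c * X ^ (e % q)) %ₘ (X ^ q - 1) = 0 :=
    (modByMonic_eq_zero_iff_dvd hm).2 hdvd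
  rw [sub_modByMonic] at hzero
  have hself : (C c * X ^ (e % q)) %ₘ (X ^ q - 1) = C c * X ^ (e % q) :=
    (modByMonic_eq_self_iff hm).2 hdeg
  rw [hself] at hzero
  exact sub_eq_zero.mp hzero

private lemma sum_modByMonic' {F : Type*} [Field F] {ι : Type*} (s : Finset ι) (g : ι → F[X])
    (q : F[X]) : (∑ a ∈ s, g a) %ₘ q = ∑ a ∈ s, (g a %ₘ q) := by
  classical
  induction s using Finset.induction_on with
  | empty => simp
  | insert _ _ h ih => rw [Finset.sum_insert h, Finset.sum_insert h, add_modByMonic, ih]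

private lemma coeff_sum_CX {F : Type*} [Field F] {ι : Type*} (s : Finset ι) (c : ι → F)
    (g : ι → ℕ) (m : ℕ) :
    (∑ a ∈ s, C (c a) * X ^ (g a)).coeff m = ∑ a ∈ s.filter (fun a => g a = m), c a := by
  classical
  rw [finset_sum_coeff, Finset.sum_filter]
  refine Finset.sum_congr rfl fun a _ => ?_
  rw [coeff_C_mul, coeff_X_pow]
  by_cases h : g a = m
  · simp [h]
  · rw [if_neg (fun hm => h hm.symm), if_neg h, mul_zero]

private lemma kron_mod {F : Type*} [Field F] {n : ℕ} (s : Fin n → ℕ)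
    (f : MvPolynomial (Fin n) F) {q : ℕ} (hq : q ≠ 0) :
    kronPoly s f %ₘ (X ^ q - 1) =
      ∑ a ∈ f.support, C (f.coeff a) * X ^ ((∑ i, a i * s i) % q) := by
  rw [kronPoly, sum_modByMonic']
  exact Finset.sum_congr rfl fun a _ => term_mod _ _ _ hq

/-- the prime maximizing the number of terms of the reduced
Kronecker image leaves at least ⌈t/2⌉ terms of f non-colliding. -/
theorem stmt6 (F : Type*) [Field F] (n T D t : ℕ)
    (f : MvPolynomial (Fin n) F) (ht : f.support.card = t) (hT : t ≤ T)
    (hdeg : ∀ a ∈ f.support, ∀ i, a i < D)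
    (N₁ : ℕ) (hN₁ : N₁ = max 1 ⌈((n : ℝ) * ((T : ℝ) - 1)) * Real.logb 2 D⌉₊)
    (s : Fin n → ℕ) (hs : ∀ i, s i = D ^ (i : ℕ))
    (p : Fin (4 * N₁) → ℕ) (hp : ∀ j, (p j).Prime) (hinj : Function.Injective p)
    (j₀ : Fin (4 * N₁))
    (hj₀ : ∀ j, numTermsMod (kronPoly s f) (p j) ≤ numTermsMod (kronPoly s f) (p j₀)) :
    (t + 1) / 2 ≤ (f.support.filter (fun a => ∀ a' ∈ f.support, a' ≠ a →
        (∑ i, a' i * s i) % p j₀ ≠ (∑ i, a i * s i) % p j₀)).card := by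
  classical
  subst ht
  by_cases hsmall : f.support.card ≤ 1
  · have hfilter : (f.support.filter (fun a => ∀ a' ∈ f.support, a' ≠ a →
        (∑ i, a' i * s i) % p j₀ ≠ (∑ i, a i * s i) % p j₀)) = f.support := by
      apply Finset.filter_true_of_mem
      intro a ha a' ha' hne
      exact absurd (Finset.card_le_one.mp hsmall a' ha' a ha) hne
    rw [hfilter]
    omega
  push_neg at hsmall
  -- t ≥ 2
  have hD : 2 ≤ D := by
    by_contra hD1
    push_neg at hD1
    obtain ⟨a₀, ha₀, b₀, hb₀, hab₀⟩ := Finset.one_lt_card.mp hsmall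
    refine hab₀ (Finsupp.ext fun i => ?_)
    have h1 := hdeg a₀ ha₀ i
    have h2 := hdeg b₀ hb₀ i
    omega
  have einj : ∀ a ∈ f.support, ∀ b ∈ f.support,
      (∑ i, a i * s i) = (∑ i, b i * s i) → a = b := by
    intro a ha b hb hab
    have h1 : (fun i : Fin n => a i) = (fun i : Fin n => b i) := by
      apply baseD_inj (D := D) _ _ (fun i => hdeg a ha i) (fun i => hdeg b hb i)
      simpa only [hs] using hab
    exact Finsupp.ext fun i => congrFun h1 i
  have ebound : ∀ a ∈ f.support, (∑ i, a i * s i) < D ^ n := by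
    intro a ha
    have := baseD_lt (by omega : 0 < D) (fun i : Fin n => a i) (fun i => hdeg a ha i)
    simpa only [hs] using this
  -- local definitions
  set NC : ℕ → Finset (Fin n →₀ ℕ) := fun q => f.support.filter
    (fun a => ∀ a' ∈ f.support, a' ≠ a → (∑ i, a' i * s i) % q ≠ (∑ i, a i * s i) % q)
    with hNC
  set CL : ℕ → Finset (Fin n →₀ ℕ) := fun q => f.support.filter
    (fun a => ¬ ∀ a' ∈ f.support, a' ≠ a → (∑ i, a' i * s i) % q ≠ (∑ i, a i * s i) % q)
    with hCL
  have hsplit : ∀ q : ℕ, (NC q).card + (CL q).card = f.support.card := by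
    intro q
    rw [hNC, hCL]
    exact Finset.card_filter_add_card_filter_not _
  -- lower bound on numTermsMod
  have lower : ∀ j : Fin (4 * N₁), (NC (p j)).card ≤ numTermsMod (kronPoly s f) (p j) := by
    intro j
    have hq : p j ≠ 0 := (hp j).ne_zero
    unfold numTermsMod
    rw [kron_mod s f hq]
    apply Finset.card_le_card_of_injOn (fun a => (∑ i, a i * s i) % p j)
    · intro a ha
      simp only [Finset.mem_coe, hNC, Finset.mem_filter] at ha
      obtain ⟨haS, hniq⟩ := ha
      simp only [Finset.mem_coe]
      rw [Polynomial.mem_support_iff, coeff_sum_CX]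
      have hfil : (f.support.filter
          (fun a' => (∑ i, a' i * s i) % p j = (∑ i, a i * s i) % p j)) = {a} := by
        ext a'
        simp only [Finset.mem_filter, Finset.mem_singleton]
        constructor
        · rintro ⟨ha'S, hmod⟩
          by_contra hne
          exact hniq a' ha'S hne hmod
        · rintro rfl; exact ⟨haS, rfl⟩
      rw [hfil, Finset.sum_singleton]
      exact MvPolynomial.mem_support_iff.mp haS
    · intro a ha b hb hab
      simp only [Finset.mem_coe, hNC, Finset.mem_filter] at ha hb
      by_contra hne
      exact hb.2 a ha.1 hne hab
  -- upper bound on numTermsMod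
  have upper : ∀ j : Fin (4 * N₁),
      2 * numTermsMod (kronPoly s f) (p j) + (CL (p j)).card ≤ 2 * f.support.card := by
    intro j
    have hq : p j ≠ 0 := (hp j).ne_zero
    have h1 : numTermsMod (kronPoly s f) (p j) ≤
        (f.support.image (fun a => (∑ i, a i * s i) % p j)).card := by
      unfold numTermsMod
      apply Finset.card_le_card
      intro m hm
      rw [kron_mod s f hq, Polynomial.mem_support_iff, coeff_sum_CX] at hm
      have hne : (f.support.filter (fun a => (∑ i, a i * s i) % p j = m)).Nonempty := by
        by_contra hemp
        rw [Finset.not_nonempty_iff_eq_empty] at hemp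
        rw [hemp, Finset.sum_empty] at hm
        exact hm rfl
      obtain ⟨a, ha⟩ := hne
      rw [Finset.mem_filter] at ha
      exact Finset.mem_image.mpr ⟨a, ha.1, ha.2⟩
    have h3 : (f.support.image (fun a => (∑ i, a i * s i) % p j)).card ≤
        (NC (p j)).card + ((CL (p j)).image (fun a => (∑ i, a i * s i) % p j)).card := by
      have hun : f.support = NC (p j) ∪ CL (p j) := by
        rw [hNC, hCL]
        exact (Finset.filter_union_filter_not_eq _ _).symm
      calc (f.support.image (fun a => (∑ i, a i * s i) % p j)).card
          = (((NC (p j)) ∪ (CL (p j))).image (fun a => (∑ i, a i * s i) % p j)).card := by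
            rw [← hun]
        _ = ((NC (p j)).image (fun a => (∑ i, a i * s i) % p j) ∪
             (CL (p j)).image (fun a => (∑ i, a i * s i) % p j)).card := by
            rw [Finset.image_union]
        _ ≤ ((NC (p j)).image (fun a => (∑ i, a i * s i) % p j)).card +
             ((CL (p j)).image (fun a => (∑ i, a i * s i) % p j)).card :=
            Finset.card_union_le _ _
        _ ≤ (NC (p j)).card + ((CL (p j)).image (fun a => (∑ i, a i * s i) % p j)).card := by
            exact Nat.add_le_add_right (Finset.card_image_le) _

    have h2 : 2 * ((CL (p j)).image (fun a => (∑ i, a i * s i) % p j)).card ≤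
        (CL (p j)).card := by
      have hbig : ∀ b ∈ (CL (p j)).image (fun a => (∑ i, a i * s i) % p j),
          2 ≤ ((CL (p j)).filter (fun a => (∑ i, a i * s i) % p j = b)).card := by
        intro b hb
        obtain ⟨a, haCL, rfl⟩ := Finset.mem_image.mp hb
        have haCL' := haCL
        rw [hCL, Finset.mem_filter] at haCL'
        obtain ⟨haS, hnp⟩ := haCL'
        push_neg at hnp
        obtain ⟨a', ha'S, hne, hmod⟩ := hnp
        have ha'CL : a' ∈ CL (p j) := by
          rw [hCL, Finset.mem_filter]
          exact ⟨ha'S, fun hpred => (hpred a haS (Ne.symm hne)) hmod.symm⟩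
        apply Finset.one_lt_card.mpr
        exact ⟨a, Finset.mem_filter.mpr ⟨haCL, rfl⟩, a',
          Finset.mem_filter.mpr ⟨ha'CL, hmod⟩, Ne.symm hne⟩
      calc 2 * ((CL (p j)).image (fun a => (∑ i, a i * s i) % p j)).card
          = ∑ _b ∈ (CL (p j)).image (fun a => (∑ i, a i * s i) % p j), 2 := by
            rw [Finset.sum_const, smul_eq_mul, mul_comm]
        _ ≤ ∑ b ∈ (CL (p j)).image (fun a => (∑ i, a i * s i) % p j),
              ((CL (p j)).filter (fun a => (∑ i, a i * s i) % p j = b)).card :=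
            Finset.sum_le_sum hbig
        _ = (CL (p j)).card := (Finset.card_eq_sum_card_image _ _).symm
    have h4 := hsplit (p j)
    omega
  -- per-pair bound (ordered so that the second exponent is ≤ the first)
  have pairmain : ∀ a ∈ f.support, ∀ b ∈ f.support, a ≠ b →
      (∑ i, b i * s i) ≤ (∑ i, a i * s i) →
      (f.support.card - 1) * (Finset.univ.filter (fun j : Fin (4 * N₁) =>
        (∑ i, a i * s i) % p j = (∑ i, b i * s i) % p j)).card ≤ N₁ := by
    intro a ha b hb hab hle
    set J := Finset.univ.filter (fun j : Fin (4 * N₁) =>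
        (∑ i, a i * s i) % p j = (∑ i, b i * s i) % p j) with hJ
    set d := (∑ i, a i * s i) - (∑ i, b i * s i) with hd
    have hdpos : 0 < d := by
      have hne : (∑ i, a i * s i) ≠ (∑ i, b i * s i) := fun h => hab (einj a ha b hb h)
      omega
    have hdlt : d < D ^ n := by
      have := ebound a ha
      omega
    have hdvd : ∀ j ∈ J, p j ∣ d := by
      intro j hj
      rw [hJ, Finset.mem_filter] at hj
      have hmod : (∑ i, b i * s i) ≡ (∑ i, a i * s i) [MOD p j] := hj.2.symm
      exact (Nat.modEq_iff_dvd' hle).mp hmod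
    have hprod : (∏ r ∈ J.image p, r) ∣ d := by
      apply Finset.prod_primes_dvd
      · intro r hr
        obtain ⟨j, _, rfl⟩ := Finset.mem_image.mp hr
        exact (hp j).prime
      · intro r hr
        obtain ⟨j, hjJ, rfl⟩ := Finset.mem_image.mp hr
        exact hdvd j hjJ
    have hpow : 2 ^ J.card ≤ ∏ r ∈ J.image p, r := by
      rw [← Finset.card_image_of_injective J hinj]
      exact Finset.pow_card_le_prod _ _ _ (fun r hr => by
        obtain ⟨j, _, rfl⟩ := Finset.mem_image.mp hr
        exact (hp j).two_le)
    have h2K : 2 ^ J.card < D ^ n :=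
      lt_of_le_of_lt (le_trans hpow (Nat.le_of_dvd hdpos hprod)) hdlt
    by_cases hK : J.card = 0
    · rw [hK]; simp
    have hT2 : 2 ≤ T := le_trans hsmall hT
    have hKlt : (J.card : ℝ) < (n : ℝ) * Real.logb 2 D := by
      have hcast : ((2:ℝ)) ^ J.card < ((D:ℝ)) ^ n := by exact_mod_cast h2K
      have hlog := Real.logb_lt_logb (b := 2) (by norm_num) (by positivity) hcast
      rwa [Real.logb_pow, Real.logb_pow, Real.logb_self_eq_one (by norm_num), mul_one] at hlog
    have hfinal : (((f.support.card - 1) * J.card : ℕ) : ℝ) <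
        ((n : ℝ) * ((T : ℝ) - 1)) * Real.logb 2 D := by
      have hK0 : (0:ℝ) ≤ (J.card : ℝ) := Nat.cast_nonneg _
      have hc1 : ((f.support.card - 1 : ℕ) : ℝ) ≤ ((T:ℝ) - 1) := by
        rw [Nat.cast_sub (by omega : 1 ≤ f.support.card)]
        have : (f.support.card : ℝ) ≤ (T : ℝ) := by exact_mod_cast hT
        push_cast
        linarith
      have hTpos : (0:ℝ) < (T:ℝ) - 1 := by
        have : (2:ℝ) ≤ (T:ℝ) := by exact_mod_cast hT2
        linarith
      have h1' := mul_le_mul_of_nonneg_right hc1 hK0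
      have h2' := mul_lt_mul_of_pos_left hKlt hTpos
      push_cast
      nlinarith [h1', h2']
    have hlt := Nat.lt_ceil.mpr hfinal
    have hle' : ⌈((n : ℝ) * ((T : ℝ) - 1)) * Real.logb 2 D⌉₊ ≤ N₁ := by
      rw [hN₁]; exact le_max_right _ _
    omega
  have pairbound : ∀ a ∈ f.support, ∀ b ∈ f.support, a ≠ b →
      (f.support.card - 1) * (Finset.univ.filter (fun j : Fin (4 * N₁) =>
        (∑ i, a i * s i) % p j = (∑ i, b i * s i) % p j)).card ≤ N₁ := by
    intro a ha b hb hab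
    rcases le_total (∑ i, b i * s i) (∑ i, a i * s i) with h | h
    · exact pairmain a ha b hb hab h
    · have hswap : (Finset.univ.filter (fun j : Fin (4 * N₁) =>
          (∑ i, a i * s i) % p j = (∑ i, b i * s i) % p j)) =
        (Finset.univ.filter (fun j : Fin (4 * N₁) =>
          (∑ i, b i * s i) % p j = (∑ i, a i * s i) % p j)) := by
        apply Finset.filter_congr
        intro j _
        constructor
        · exact Eq.symm
        · exact Eq.symm
      rw [hswap]
      exact pairmain b hb a ha hab.symm h
  -- collision count per prime is at most number of colliding ordered pairs
  set Pj : Fin (4 * N₁) → Finset ((Fin n →₀ ℕ) × (Fin n →₀ ℕ)) := fun j =>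
    f.support.offDiag.filter (fun x =>
      (∑ i, x.1 i * s i) % p j = (∑ i, x.2 i * s i) % p j) with hPj
  have hcoll_le : ∀ j : Fin (4 * N₁), (CL (p j)).card ≤ (Pj j).card := by
    intro j
    have hwit : ∀ a ∈ CL (p j), ∃ a', a' ∈ f.support ∧ a' ≠ a ∧
        (∑ i, a' i * s i) % p j = (∑ i, a i * s i) % p j := by
      intro a ha
      rw [hCL, Finset.mem_filter] at ha
      have h2 := ha.2
      push_neg at h2
      obtain ⟨a', h1', h2', h3'⟩ := h2
      exact ⟨a', h1', h2', h3'⟩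
    set w : (Fin n →₀ ℕ) → (Fin n →₀ ℕ) := fun a =>
      if h : ∃ a', a' ∈ f.support ∧ a' ≠ a ∧
          (∑ i, a' i * s i) % p j = (∑ i, a i * s i) % p j
      then h.choose else a with hw
    have hwp : ∀ a ∈ CL (p j), w a ∈ f.support ∧ w a ≠ a ∧
        (∑ i, (w a) i * s i) % p j = (∑ i, a i * s i) % p j := by
      intro a ha
      have hex := hwit a ha
      simp only [hw, dif_pos hex]
      exact hex.choose_spec
    apply Finset.card_le_card_of_injOn (fun a => (w a, a))
    · intro a ha
      have h := hwp a ha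
      have haS : a ∈ f.support := by
        simp only [Finset.mem_coe, hCL, Finset.mem_filter] at ha; exact ha.1
      simp only [Finset.mem_coe, hPj, Finset.mem_filter, Finset.mem_offDiag]
      exact ⟨⟨h.1, haS, h.2.1⟩, h.2.2⟩
    · intro a _ b _ hab
      exact congrArg Prod.snd hab
  have hswapsum : ∑ j : Fin (4 * N₁), (Pj j).card =
      ∑ x ∈ f.support.offDiag, (Finset.univ.filter (fun j : Fin (4 * N₁) =>
        (∑ i, x.1 i * s i) % p j = (∑ i, x.2 i * s i) % p j)).card := by
    simp only [hPj, Finset.card_filter]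
    rw [Finset.sum_comm]
  have htotal : (f.support.card - 1) * ∑ j : Fin (4 * N₁), (CL (p j)).card ≤
      (f.support.card - 1) * (f.support.card * N₁) := by
    have hsub : f.support.card * f.support.card - f.support.card
        = (f.support.card - 1) * f.support.card := by
      rw [Nat.sub_mul, one_mul]
    calc (f.support.card - 1) * ∑ j : Fin (4 * N₁), (CL (p j)).card
        ≤ (f.support.card - 1) * ∑ j : Fin (4 * N₁), (Pj j).card :=
          Nat.mul_le_mul_left _ (Finset.sum_le_sum fun j _ => hcoll_le j)
      _ = ∑ x ∈ f.support.offDiag, (f.support.card - 1) *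
            (Finset.univ.filter (fun j : Fin (4 * N₁) =>
              (∑ i, x.1 i * s i) % p j = (∑ i, x.2 i * s i) % p j)).card := by
          rw [hswapsum, Finset.mul_sum]
      _ ≤ ∑ _x ∈ f.support.offDiag, N₁ := Finset.sum_le_sum (fun x hx => by
          rw [Finset.mem_offDiag] at hx
          exact pairbound x.1 hx.1 x.2 hx.2.1 hx.2.2)
      _ = f.support.offDiag.card * N₁ := by rw [Finset.sum_const, smul_eq_mul]
      _ = (f.support.card * f.support.card - f.support.card) * N₁ := by
          rw [Finset.offDiag_card]
      _ = (f.support.card - 1) * (f.support.card * N₁) := by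
          rw [hsub, mul_assoc]
  have htotal2 : ∑ j : Fin (4 * N₁), (CL (p j)).card ≤ f.support.card * N₁ :=
    Nat.le_of_mul_le_mul_left htotal (by omega : 0 < f.support.card - 1)
  obtain ⟨j₁, -, hj₁⟩ := Finset.exists_min_image Finset.univ
    (fun j => (CL (p j)).card) ⟨j₀, Finset.mem_univ _⟩
  have hmin : 4 * N₁ * (CL (p j₁)).card ≤ f.support.card * N₁ := by
    calc 4 * N₁ * (CL (p j₁)).card
        = (Finset.univ : Finset (Fin (4 * N₁))).card • (CL (p j₁)).card := by
          rw [Finset.card_univ, Fintype.card_fin, smul_eq_mul]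
      _ ≤ ∑ j : Fin (4 * N₁), (CL (p j)).card :=
          Finset.card_nsmul_le_sum _ _ _ (fun j _ => hj₁ j (Finset.mem_univ j))
      _ ≤ f.support.card * N₁ := htotal2
  have hN1pos : 0 < N₁ := by
    rw [hN₁]; exact lt_of_lt_of_le Nat.one_pos (le_max_left _ _)
  have h4c : 4 * (CL (p j₁)).card ≤ f.support.card := by
    have h' : N₁ * (4 * (CL (p j₁)).card) ≤ N₁ * f.support.card := by
      calc N₁ * (4 * (CL (p j₁)).card) = 4 * N₁ * (CL (p j₁)).card := by ring
        _ ≤ f.support.card * N₁ := hmin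
        _ = N₁ * f.support.card := Nat.mul_comm _ _
    exact Nat.le_of_mul_le_mul_left h' hN1pos
  have e0 := hsplit (p j₀)
  have e1 := hsplit (p j₁)
  have l1 := lower j₁
  have l2 := hj₀ j₁
  have u0 := upper j₀
  have goal' : (f.support.card + 1) / 2 ≤ (NC (p j₀)).card := by omega
  simpa only [hNC] using goal'
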